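/- Let (x_i, f_i) be a Schauder frame of a Banach space X such that every normalized block sequence of (x_i) is weakly null. Then the frame is pre-shrinking. -/

import Mathlib

open Filter Topology

/-- `u` is a normalized block sequence of `(x i)`. -/
def IsNormalizedBlock {X : Type*} [NormedAddCommGroup X] [NormedSpace ℝ X]
    (x : ℕ → X) (u : ℕ → X) : Prop :=
  ∃ (m n : ℕ → ℕ) (a : ℕ → ℝ), (∀ k, m k ≤ n k) ∧ (∀ k, n k < m (k + 1)) ∧
    (∀ k, u k = ∑ i ∈ Finset.Icc (m k) (n k), a i • x i) ∧ ∀ k, ‖u k‖ = 1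

/-- `u` is weakly null. -/
def WeaklyNull {X : Type*} [NormedAddCommGroup X] [NormedSpace ℝ X] (u : ℕ → X) : Prop :=
  ∀ g : X →L[ℝ] ℝ, Tendsto (fun k => g (u k)) atTop (𝓝 0)

set_option maxHeartbeats 1000000 in
/-- If `(x i, f i)` is a Schauder frame of a Banach space `X` such that
every normalized block sequence of `(x i)` is weakly null, then the frame is pre-shrinking:
for every `g ∈ X*`, the series `∑ g (x i) • f i` converges in norm (to `g`). -/
theorem schauderFrame_blocksWeaklyNull_preShrinking
    {X : Type*} [NormedAddCommGroup X] [NormedSpace ℝ X] [CompleteSpace X]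
    (x : ℕ → X) (f : ℕ → X →L[ℝ] ℝ)
    (hx : ∀ i, x i ≠ 0) (hf : ∀ i, f i ≠ 0)
    (hframe : ∀ v : X,
      Tendsto (fun n => ∑ i ∈ Finset.range n, f i v • x i) atTop (𝓝 v))
    (hblock : ∀ u : ℕ → X, IsNormalizedBlock x u → WeaklyNull u) :
    ∀ g : X →L[ℝ] ℝ,
      Tendsto (fun n => ∑ i ∈ Finset.range n, g (x i) • f i) atTop (𝓝 g) := by
  intro g
  classical
  set S : ℕ → X →L[ℝ] X := fun n => ∑ i ∈ Finset.range n, (f i).smulRight (x i) with hSdef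
  have hSapp : ∀ n v, S n v = ∑ i ∈ Finset.range n, f i v • x i := by
    intro n v
    simp [hSdef, ContinuousLinearMap.sum_apply]
  have hTeq : (fun n => ∑ i ∈ Finset.range n, g (x i) • f i) = fun n => g.comp (S n) := by
    funext n
    ext v
    simp [hSapp, ContinuousLinearMap.sum_apply, mul_comm]
  rw [hTeq]
  have hbdd : ∀ v : X, ∃ C, ∀ n, ‖S n v‖ ≤ C := by
    intro v
    obtain ⟨C, hC⟩ := (hframe v).norm.bddAbove_range
    exact ⟨C, fun n => by simpa [hSapp] using hC ⟨n, rfl⟩⟩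
  obtain ⟨C, hC⟩ := banach_steinhaus hbdd
  have hC0 : 0 ≤ C := le_trans (norm_nonneg _) (hC 0)
  by_contra hcon
  rw [Metric.tendsto_atTop] at hcon
  push_neg at hcon
  obtain ⟨ε, hε, hcon⟩ := hcon
  -- Key step: good blocks starting arbitrarily late
  have key : ∀ M : ℕ, ∃ p : ℕ × ℕ × X, M ≤ p.1 ∧ p.1 < p.2.1 ∧ ‖p.2.2‖ ≤ 1 ∧
      ε / 4 ≤ |g (S p.2.1 p.2.2 - S p.1 p.2.2)| := by
    intro M
    obtain ⟨n, hnM, hn⟩ := hcon M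
    have hnorm : ε ≤ ‖g - g.comp (S n)‖ := by
      rw [norm_sub_rev]
      rwa [dist_eq_norm] at hn
    have h2 : ε / 2 < ‖g - g.comp (S n)‖ := lt_of_lt_of_le (by linarith) hnorm
    obtain ⟨v, hv1, hv2⟩ := (g - g.comp (S n)).exists_lt_apply_of_lt_opNorm h2
    have hv1' : ‖v‖ ≤ 1 := le_of_lt hv1
    have hv2' : ε / 2 < |g v - g (S n v)| := by
      simpa [ContinuousLinearMap.sub_apply, Real.norm_eq_abs] using hv2
    -- choose a tail index N with S N v close to v
    have hδ : (0:ℝ) < ε / (4 * (‖g‖ + 1)) := by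
      apply div_pos (by linarith)
      have := norm_nonneg g
      linarith
    have htend : Tendsto (fun m => S m v) atTop (𝓝 v) := by
      simpa [hSapp] using hframe v
    rw [Metric.tendsto_atTop] at htend
    obtain ⟨N₀, hN₀⟩ := htend _ hδ
    refine ⟨(n, max N₀ (n + 1), v), hnM, ?_, hv1', ?_⟩
    · exact lt_of_lt_of_le (Nat.lt_succ_self n) (le_max_right _ _)
    · set N := max N₀ (n + 1) with hN
      have hclose : ‖S N v - v‖ < ε / (4 * (‖g‖ + 1)) := by
        have := hN₀ N (le_max_left _ _)
        rwa [dist_eq_norm] at this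
      have hgb : |g (S N v - v)| ≤ ‖g‖ * ‖S N v - v‖ := by
        simpa [Real.norm_eq_abs] using (g.le_opNorm (S N v - v))
      have hgsmall : |g (S N v - v)| < ε / 4 := by
        have h1 : ‖g‖ * ‖S N v - v‖ ≤ ‖g‖ * (ε / (4 * (‖g‖ + 1))) := by
          by_cases hg0 : ‖g‖ = 0
          · simp [hg0]
          · exact mul_le_mul_of_nonneg_left (le_of_lt hclose) (norm_nonneg g)
        have h2 : ‖g‖ * (ε / (4 * (‖g‖ + 1))) < ε / 4 := by
          have hg1 : (0:ℝ) < ‖g‖ + 1 := by have := norm_nonneg g; linarith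
          have heq : ‖g‖ * (ε / (4 * (‖g‖ + 1))) = ε / 4 * (‖g‖ / (‖g‖ + 1)) := by
            field_simp
          rw [heq]
          have hlt1 : ‖g‖ / (‖g‖ + 1) < 1 := (div_lt_one hg1).mpr (by linarith)
          have hq0 : 0 ≤ ‖g‖ / (‖g‖ + 1) := div_nonneg (norm_nonneg g) (le_of_lt hg1)
          have hp : (0:ℝ) < ε / 4 * (1 - ‖g‖ / (‖g‖ + 1)) :=
            mul_pos (by linarith) (by linarith)
          nlinarith
        calc |g (S N v - v)| ≤ ‖g‖ * ‖S N v - v‖ := hgb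
          _ ≤ ‖g‖ * (ε / (4 * (‖g‖ + 1))) := h1
          _ < ε / 4 := h2
      have hsplit : g (S N v - S n v) = g (S N v - v) + (g v - g (S n v)) := by
        simp only [map_sub]
        ring
      rw [hsplit]
      have habs : |g (S N v - v) + (g v - g (S n v))| ≥ |g v - g (S n v)| - |g (S N v - v)| := by
        have := abs_add_le (g (S N v - v)) (g v - g (S n v))
        have h3 := abs_sub_abs_le_abs_sub (g v - g (S n v)) (-(g (S N v - v)))
        simp only [abs_neg] at h3
        calc |g v - g (S n v)| - |g (S N v - v)| ≤ |g v - g (S n v) - -(g (S N v - v))| := h3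
          _ = |g (S N v - v) + (g v - g (S n v))| := by ring_nf
      linarith
  choose F hF1 hF2 hF3 hF4 using key
  obtain ⟨s, hs0, hsS⟩ : ∃ sq : ℕ → ℕ × ℕ × X, sq 0 = F 0 ∧
      ∀ k, sq (k + 1) = F ((sq k).2.1 + 1) :=
    ⟨fun k => Nat.rec (F 0) (fun _ p => F (p.2.1 + 1)) k, rfl, fun _ => rfl⟩
  have hrange : ∀ k, ∃ M, s k = F M := by
    intro k
    cases k with
    | zero => exact ⟨0, hs0⟩
    | succ k => exact ⟨_, hsS k⟩
  have hlt : ∀ k, (s k).1 < (s k).2.1 := by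
    intro k; obtain ⟨M, hM⟩ := hrange k; rw [hM]; exact hF2 M
  have hvb : ∀ k, ‖(s k).2.2‖ ≤ 1 := by
    intro k; obtain ⟨M, hM⟩ := hrange k; rw [hM]; exact hF3 M
  have hgb : ∀ k, ε / 4 ≤ |g (S (s k).2.1 (s k).2.2 - S (s k).1 (s k).2.2)| := by
    intro k; obtain ⟨M, hM⟩ := hrange k; rw [hM]; exact hF4 M
  have hsep : ∀ k, (s k).2.1 < (s (k + 1)).1 := by
    intro k
    rw [hsS k]
    exact Nat.lt_of_succ_le (hF1 _)
  have hmono : ∀ k l, k < l → (s k).2.1 < (s l).1 := by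
    intro k l hkl
    induction l with
    | zero => omega
    | succ l ih =>
      rcases Nat.lt_succ_iff_lt_or_eq.mp hkl with h | h
      · exact lt_trans (lt_trans (ih h) (hlt l)) (hsep l)
      · subst h; exact hsep k
  set w : ℕ → X := fun k => S (s k).2.1 (s k).2.2 - S (s k).1 (s k).2.2 with hwdef
  have hwpos : ∀ k, 0 < ‖w k‖ := by
    intro k
    rw [norm_pos_iff]
    intro h0
    have := hgb k
    rw [show S (s k).2.1 (s k).2.2 - S (s k).1 (s k).2.2 = w k from rfl, h0] at this
    simp at this
    linarith
  have hwub : ∀ k, ‖w k‖ ≤ 2 * C := by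
    intro k
    have h1 : ‖S (s k).2.1 (s k).2.2‖ ≤ C := by
      calc ‖S (s k).2.1 (s k).2.2‖ ≤ ‖S (s k).2.1‖ * ‖(s k).2.2‖ := (S _).le_opNorm _
        _ ≤ C * 1 := mul_le_mul (hC _) (hvb k) (norm_nonneg _) hC0
        _ = C := mul_one C
    have h2 : ‖S (s k).1 (s k).2.2‖ ≤ C := by
      calc ‖S (s k).1 (s k).2.2‖ ≤ ‖S (s k).1‖ * ‖(s k).2.2‖ := (S _).le_opNorm _
        _ ≤ C * 1 := mul_le_mul (hC _) (hvb k) (norm_nonneg _) hC0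
        _ = C := mul_one C
    calc ‖w k‖ ≤ ‖S (s k).2.1 (s k).2.2‖ + ‖S (s k).1 (s k).2.2‖ := norm_sub_le _ _
      _ ≤ 2 * C := by linarith
  set u : ℕ → X := fun k => ‖w k‖⁻¹ • w k with hudef
  have hunorm : ∀ k, ‖u k‖ = 1 := by
    intro k
    rw [hudef]
    simp only [norm_smul, norm_inv, norm_norm]
    exact inv_mul_cancel₀ (ne_of_gt (hwpos k))
  -- block representation of w
  have hwsum : ∀ k, w k = ∑ i ∈ Finset.Icc (s k).1 ((s k).2.1 - 1),
      f i ((s k).2.2) • x i := by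
    intro k
    rw [hwdef]
    simp only [hSapp]
    rw [← Finset.sum_Ico_eq_sub _ (le_of_lt (hlt k))]
    congr 1
    rw [← Finset.Ico_add_one_right_eq_Icc]
    congr 1
    have := hlt k
    omega
  -- coefficient function
  set a : ℕ → ℝ := fun i =>
    if h : ∃ k, (s k).1 ≤ i ∧ i ≤ (s k).2.1 - 1 then
      ‖w h.choose‖⁻¹ * f i ((s h.choose).2.2)
    else 0 with hadef
  have huniq : ∀ k k' i, (s k).1 ≤ i → i ≤ (s k).2.1 - 1 →
      (s k').1 ≤ i → i ≤ (s k').2.1 - 1 → k = k' := by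
    intro k k' i h1 h2 h3 h4
    by_contra hne
    rcases Nat.lt_or_ge k k' with h | h
    · have := hmono k k' h
      have := hlt k
      omega
    · have hk : k' < k := by omega
      have := hmono k' k hk
      have := hlt k'
      omega
  have ha : ∀ k i, (s k).1 ≤ i → i ≤ (s k).2.1 - 1 →
      a i = ‖w k‖⁻¹ * f i ((s k).2.2) := by
    intro k i h1 h2
    have hex : ∃ k, (s k).1 ≤ i ∧ i ≤ (s k).2.1 - 1 := ⟨k, h1, h2⟩
    rw [hadef]
    simp only [dif_pos hex]
    have heq : hex.choose = k :=
      huniq hex.choose k i hex.choose_spec.1 hex.choose_spec.2 h1 h2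
    rw [heq]
  have hblockrep : IsNormalizedBlock x u := by
    refine ⟨fun k => (s k).1, fun k => (s k).2.1 - 1, a, ?_, ?_, ?_, hunorm⟩
    · intro k
      show (s k).1 ≤ (s k).2.1 - 1
      have := hlt k; omega
    · intro k
      show (s k).2.1 - 1 < (s (k + 1)).1
      have := hsep k; have := hlt k; omega
    · intro k
      show ‖w k‖⁻¹ • w k = _
      nth_rewrite 2 [hwsum k]
      rw [Finset.smul_sum]
      apply Finset.sum_congr rfl
      intro i hi
      rw [Finset.mem_Icc] at hi
      rw [ha k i hi.1 hi.2, smul_smul]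
  have hweak := hblock u hblockrep g
  rw [Metric.tendsto_atTop] at hweak
  have hδpos : (0:ℝ) < ε / 4 / (2 * C + 1) := by positivity
  obtain ⟨K, hK⟩ := hweak _ hδpos
  have hKK := hK K le_rfl
  rw [Real.dist_eq, sub_zero] at hKK
  have hlow : ε / 4 / (2 * C + 1) ≤ |g (u K)| := by
    have : g (u K) = ‖w K‖⁻¹ * g (w K) := by
      rw [hudef]; simp [map_smul]
    rw [this, abs_mul, abs_of_pos (inv_pos.mpr (hwpos K))]
    have h1 : ε / 4 ≤ |g (w K)| := hgb K
    have h2 : ‖w K‖ ≤ 2 * C + 1 := by linarith [hwub K]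
    have h3 : (2 * C + 1)⁻¹ ≤ ‖w K‖⁻¹ :=
      inv_anti₀ (hwpos K) h2
    calc ε / 4 / (2 * C + 1) = (2 * C + 1)⁻¹ * (ε / 4) := by ring
      _ ≤ ‖w K‖⁻¹ * |g (w K)| := by
          apply mul_le_mul h3 h1 (by linarith) (le_of_lt (inv_pos.mpr (hwpos K)))
    
  linarith
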